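/- arXiv:math/0410343 — 4 statements merged into one kernel-verified Lean document; each statement's English description precedes it below -/
import Mathlib

section
/- For a standard complex Gaussian random variable ζ (i.e., with density π⁻¹ e^{-|z|²} with respect to Lebesgue measure on ℂ), the expectation of log|ζ| equals -γ/2, where γ is the Euler–Mascheroni constant. In particular, E[log|ζ|] is finite. -/
open MeasureTheory Real
open Set

lemma aux_integral_exp_neg_log :
    ∫ t in Ioi (0:ℝ), Real.exp (-t) * Real.log t = -Real.eulerMascheroniConstant := by
  have h1 := Complex.hasDerivAt_GammaIntegral (s := 1) (by norm_num)
  have h2 : Complex.Gamma =ᶠ[nhds (1:ℂ)] Complex.GammaIntegral := by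
    filter_upwards [(Complex.continuous_re.isOpen_preimage _ isOpen_Ioi).mem_nhds
      (by norm_num : (1:ℂ) ∈ Complex.re ⁻¹' Ioi 0)] with s hs
    exact Complex.Gamma_eq_integral hs
  have h3 : HasDerivAt Complex.Gamma
      (∫ t in Ioi (0:ℝ), (t:ℂ) ^ ((1:ℂ)-1) * (Real.log t * Real.exp (-t))) 1 :=
    h1.congr_of_eventuallyEq h2
  have h4 := h3.unique Complex.hasDerivAt_Gamma_one
  have h5 : (∫ t in Ioi (0:ℝ), (t:ℂ) ^ ((1:ℂ)-1) * (Real.log t * Real.exp (-t)))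
      = ((∫ t in Ioi (0:ℝ), Real.exp (-t) * Real.log t : ℝ) : ℂ) := by
    rw [show ((∫ t in Ioi (0:ℝ), Real.exp (-t) * Real.log t : ℝ) : ℂ)
        = ∫ t in Ioi (0:ℝ), ((Real.exp (-t) * Real.log t : ℝ) : ℂ) from integral_ofReal.symm]
    refine integral_congr_ae (.of_forall fun t => ?_)
    push_cast
    rw [sub_self, Complex.cpow_zero]
    ring
  rw [h5] at h4
  exact_mod_cast h4

lemma aux_log_abs_le (t : ℝ) (ht : 0 < t) : |Real.log t| ≤ t + 2 * t ^ (-(1/2) : ℝ) := by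
  rcases le_or_gt 1 t with h | h
  · rw [abs_of_nonneg (Real.log_nonneg h)]
    have := Real.log_le_sub_one_of_pos ht
    have h2 : (0:ℝ) ≤ 2 * t ^ (-(1/2) : ℝ) := by positivity
    linarith
  · rw [abs_of_nonpos (Real.log_nonpos ht.le h.le)]
    have h1 : Real.log (t ^ (-(1/2) : ℝ)) ≤ t ^ (-(1/2) : ℝ) - 1 :=
      Real.log_le_sub_one_of_pos (Real.rpow_pos_of_pos ht _)
    rw [Real.log_rpow ht] at h1
    nlinarith [ht.le]

lemma aux_integrableOn_exp_neg_log :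
    IntegrableOn (fun t => Real.exp (-t) * Real.log t) (Ioi (0:ℝ)) := by
  have h2 : IntegrableOn (fun x : ℝ => Real.exp (-x) * x ^ ((2:ℝ) - 1)) (Ioi 0) :=
    Real.GammaIntegral_convergent (by norm_num)
  have hh : IntegrableOn (fun x : ℝ => Real.exp (-x) * x ^ ((1/2:ℝ) - 1)) (Ioi 0) :=
    Real.GammaIntegral_convergent (by norm_num)
  refine Integrable.mono (h2.add (hh.const_mul 2)) ?_ ?_
  · exact ((Real.continuous_exp.comp continuous_neg).measurable.mul
      Real.measurable_log).aestronglyMeasurable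
  · rw [ae_restrict_iff' measurableSet_Ioi]
    refine .of_forall fun t ht => ?_
    have ht : 0 < t := ht
    have h3 : t ^ ((2:ℝ) - 1) = t := by
      norm_num
    have h4 : t ^ ((1/2:ℝ) - 1) = t ^ (-(1/2) : ℝ) := by norm_num
    have h5 : (0:ℝ) ≤ Real.exp (-t) * t ^ ((2:ℝ)-1) + 2 * (Real.exp (-t) * t ^ ((1/2:ℝ)-1)) := by
      positivity
    simp only [Pi.add_apply]
    rw [Real.norm_eq_abs, Real.norm_eq_abs, abs_of_nonneg h5, abs_mul,
      abs_of_nonneg (Real.exp_pos _).le, h3, h4]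
    have := aux_log_abs_le t ht
    nlinarith [(Real.exp_pos (-t)).le, abs_nonneg (Real.log t), this]

lemma aux_integrable_comp_polarCoord_symm (f : ℝ × ℝ → ℝ) :
    IntegrableOn (fun p => p.1 • f (polarCoord.symm p)) polarCoord.target ↔
      Integrable f := by
  set B : ℝ × ℝ → ℝ × ℝ →L[ℝ] ℝ × ℝ := fun p =>
    LinearMap.toContinuousLinearMap (Matrix.toLin (Module.Basis.finTwoProd ℝ) (Module.Basis.finTwoProd ℝ)
      !![Real.cos p.2, -p.1 * Real.sin p.2; Real.sin p.2, p.1 * Real.cos p.2])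
  have A : ∀ p ∈ polarCoord.target, HasFDerivWithinAt polarCoord.symm (B p) polarCoord.target p :=
    fun p _ => (hasFDerivAt_polarCoord_symm p).hasFDerivWithinAt
  have B_det : ∀ p, (B p).det = p.1 := by
    intro p
    conv_rhs => rw [← one_mul p.1, ← cos_sq_add_sin_sq p.2]
    simp only [B, neg_mul, LinearMap.det_toContinuousLinearMap, LinearMap.det_toLin,
      Matrix.det_fin_two_of, sub_neg_eq_add]
    ring
  have hinj : InjOn polarCoord.symm polarCoord.target := polarCoord.symm.injOn
  have key := integrableOn_image_iff_integrableOn_abs_det_fderiv_smul volume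
    polarCoord.open_target.measurableSet A hinj f
  rw [polarCoord.symm_image_target_eq_source] at key
  have hsrc : IntegrableOn f polarCoord.source ↔ Integrable f := by
    unfold IntegrableOn
    rw [Measure.restrict_congr_set polarCoord_source_ae_eq_univ, Measure.restrict_univ]
  rw [← hsrc, key]
  refine integrableOn_congr_fun (fun p hp => ?_) polarCoord.open_target.measurableSet
  rw [B_det, abs_of_pos hp.1]

lemma aux_integrable_comp_complex_polarCoord_symm (f : ℂ → ℝ) :
    IntegrableOn (fun p : ℝ × ℝ => p.1 • f (Complex.polarCoord.symm p)) polarCoord.target ↔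
      Integrable f := by
  rw [← (Complex.volume_preserving_equiv_real_prod.symm).integrable_comp_emb
      Complex.measurableEquivRealProd.symm.measurableEmbedding,
    ← aux_integrable_comp_polarCoord_symm (f ∘ Complex.measurableEquivRealProd.symm)]
  rfl

lemma aux_radial_eq (x : ℝ) (hx : x ∈ Ioi (0:ℝ)) :
    (|(2:ℝ)| * x ^ ((2:ℝ)-1)) • ((4:ℝ)⁻¹ * π⁻¹ * (Real.exp (-x ^ (2:ℝ)) * Real.log (x ^ (2:ℝ))))
      = x * (π⁻¹ * Real.exp (-x ^ 2) * Real.log x) := by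
  have hx : (0:ℝ) < x := hx
  have h2 : x ^ (2:ℝ) = x ^ 2 := by
    rw [show (2:ℝ) = ((2:ℕ):ℝ) by norm_num, Real.rpow_natCast]
  rw [h2, show ((2:ℝ)-1) = 1 by norm_num, Real.rpow_one, Real.log_pow, smul_eq_mul, abs_two]
  push_cast
  ring

lemma aux_main :
    Integrable (fun z : ℂ => π⁻¹ * Real.exp (-‖z‖ ^ 2) * Real.log (‖z‖)) ∧
    ∫ z : ℂ, π⁻¹ * Real.exp (-‖z‖ ^ 2) * Real.log (‖z‖)
      = -Real.eulerMascheroniConstant / 2 := by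
  set F : ℂ → ℝ := fun z => π⁻¹ * Real.exp (-‖z‖ ^ 2) * Real.log (‖z‖)
    with hF
  set u : ℝ → ℝ := fun x => x * (π⁻¹ * Real.exp (-x ^ 2) * Real.log x) with hu
  have hcongr : ∀ p ∈ polarCoord.target,
      p.1 • F (Complex.polarCoord.symm p) = u p.1 * (1:ℝ) := by
    intro p hp
    have h1 : ‖Complex.polarCoord.symm p‖ = p.1 := by
      rw [Complex.norm_polarCoord_symm, abs_of_pos hp.1]
    rw [hF, hu]
    simp only [h1, smul_eq_mul]
    ring
  have htarget : polarCoord.target = Ioi (0:ℝ) ×ˢ Ioo (-π) π := rfl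
  have hu_int : IntegrableOn u (Ioi (0:ℝ)) := by
    have h0 := (integrableOn_Ioi_comp_rpow_iff
      (fun t => (4:ℝ)⁻¹ * π⁻¹ * (Real.exp (-t) * Real.log t)) (p := 2) two_ne_zero).mpr
      (aux_integrableOn_exp_neg_log.const_mul _)
    exact (integrableOn_congr_fun aux_radial_eq measurableSet_Ioi).mp h0
  have hprod : IntegrableOn (fun p : ℝ × ℝ => u p.1 * (1:ℝ)) polarCoord.target := by
    rw [htarget, IntegrableOn, Measure.volume_eq_prod, ← Measure.prod_restrict]
    exact hu_int.mul_prod ((integrableOn_const_iff (C := (1:ℝ))).mpr (Or.inr measure_Ioo_lt_top))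
  have hFint : Integrable F := by
    refine (aux_integrable_comp_complex_polarCoord_symm F).mp ?_
    exact (integrableOn_congr_fun hcongr polarCoord.open_target.measurableSet).mpr hprod
  refine ⟨hFint, ?_⟩
  have hval : ∫ z : ℂ, F z = (∫ x in Ioi (0:ℝ), u x) * ∫ _ in Ioo (-π) π, (1:ℝ) := by
    rw [← Complex.integral_comp_polarCoord_symm F,
      setIntegral_congr_fun polarCoord.open_target.measurableSet hcongr, htarget,
      Measure.volume_eq_prod]
    exact setIntegral_prod_mul u (fun _ => (1:ℝ)) _ _
  have hru : ∫ x in Ioi (0:ℝ), u x = (4:ℝ)⁻¹ * π⁻¹ * -Real.eulerMascheroniConstant := by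
    have h0 := integral_comp_rpow_Ioi
      (fun t => (4:ℝ)⁻¹ * π⁻¹ * (Real.exp (-t) * Real.log t)) (p := 2) two_ne_zero
    rw [setIntegral_congr_fun measurableSet_Ioi aux_radial_eq] at h0
    rw [h0, integral_const_mul, aux_integral_exp_neg_log]
  have hone : ∫ _ in Ioo (-π) π, (1:ℝ) = 2 * π := by
    rw [setIntegral_const, Real.volume_real_Ioo, smul_eq_mul, mul_one,
      max_eq_left (by linarith [Real.pi_pos])]
    ring
  rw [hval, hru, hone]
  field_simp
  ring


/-- The distribution of a standard complex Gaussian random variable: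
the measure on `ℂ` with density `z ↦ π⁻¹ exp (-|z|²)` with respect to
Lebesgue measure on `ℂ ≅ ℝ²`. -/
noncomputable def stdComplexGaussian : Measure ℂ :=
  volume.withDensity fun z => ENNReal.ofReal (π⁻¹ * Real.exp (-‖z‖ ^ 2))

/-- For a standard complex Gaussian random variable `ζ`, the expectation of
`log |ζ|` is finite and equals `-γ/2`, where `γ` is the Euler–Mascheroni
constant. -/
theorem integral_log_abs_stdComplexGaussian :
    Integrable (fun z : ℂ => Real.log (‖z‖)) stdComplexGaussian ∧
    ∫ z : ℂ, Real.log (‖z‖) ∂stdComplexGaussian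
      = -Real.eulerMascheroniConstant / 2 := by
  obtain ⟨hint, hval⟩ := aux_main
  have hd : Continuous fun z : ℂ => π⁻¹ * Real.exp (-‖z‖ ^ 2) :=
    continuous_const.mul (Real.continuous_exp.comp ((continuous_norm.pow 2).neg))
  constructor
  · rw [stdComplexGaussian, integrable_withDensity_iff hd.measurable.ennreal_ofReal
      (ae_of_all _ fun z => ENNReal.ofReal_lt_top)]
    refine hint.congr (.of_forall fun z => ?_)
    dsimp only
    rw [ENNReal.toReal_ofReal (by positivity)]
    ring
  · rw [stdComplexGaussian,
      show (fun z : ℂ => ENNReal.ofReal (π⁻¹ * Real.exp (-‖z‖ ^ 2)))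
        = fun z : ℂ => ((π⁻¹ * Real.exp (-‖z‖ ^ 2)).toNNReal : ENNReal) from rfl,
      integral_withDensity_eq_integral_smul (hd.measurable.real_toNNReal) _]
    rw [← hval]
    refine integral_congr_ae (.of_forall fun z => ?_)
    dsimp only
    rw [NNReal.smul_def, smul_eq_mul, Real.coe_toNNReal _ (by positivity)]
end

section
/- Let f and g be two holomorphic functions on a domain G (or more generally, two sequences of holomorphic functions defining kernels K_f(z,w) = ∑_k f_k(z)\overline{f_k(w)} and K_g(z,w) = ∑_k g_k(z)\overline{g_k(w)}, convergent locally uniformly). If K_f(z,z) = K_g(z,z) for all z ∈ G, then K_f(z,w) = K_g(z,w) for all z, w ∈ G. -/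
open Filter Topology

private lemma tluo_sub {α : Type*} [TopologicalSpace α] {F H : ℕ → α → ℂ} {f h : α → ℂ}
    {s : Set α} (hF : TendstoLocallyUniformlyOn F f atTop s)
    (hH : TendstoLocallyUniformlyOn H h atTop s) :
    TendstoLocallyUniformlyOn (fun n x => F n x - H n x) (fun x => f x - h x) atTop s := by
  rw [Metric.tendstoLocallyUniformlyOn_iff] at hF hH ⊢
  intro ε hε x hx
  obtain ⟨t1, ht1, h1⟩ := hF (ε/2) (by positivity) x hx
  obtain ⟨t2, ht2, h2⟩ := hH (ε/2) (by positivity) x hx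
  refine ⟨t1 ∩ t2, Filter.inter_mem ht1 ht2, ?_⟩
  filter_upwards [h1, h2] with n hn1 hn2 y hy
  calc dist (f y - h y) (F n y - H n y) ≤ dist (f y) (F n y) + dist (h y) (H n y) :=
        dist_sub_sub_le _ _ _ _
    _ < ε/2 + ε/2 := add_lt_add (hn1 y hy.1) (hn2 y hy.2)
    _ = ε := by ring

private lemma tluo_conj {α : Type*} [TopologicalSpace α] {F : ℕ → α → ℂ} {f : α → ℂ}
    {s : Set α} (hF : TendstoLocallyUniformlyOn F f atTop s) :
    TendstoLocallyUniformlyOn (fun n x => starRingEnd ℂ (F n x))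
      (fun x => starRingEnd ℂ (f x)) atTop s := by
  rw [Metric.tendstoLocallyUniformlyOn_iff] at hF ⊢
  intro ε hε x hx
  obtain ⟨t, ht, h1⟩ := hF ε hε x hx
  refine ⟨t, ht, ?_⟩
  filter_upwards [h1] with n hn y hy
  simpa [Complex.dist_conj_conj] using hn y hy

private lemma hasDerivAt_conj_conj {f : ℂ → ℂ} {c x : ℂ} (h : HasDerivAt f c (starRingEnd ℂ x)) :
    HasDerivAt (fun z => starRingEnd ℂ (f (starRingEnd ℂ z))) (starRingEnd ℂ c) x := by
  rw [hasDerivAt_iff_tendsto_slope] at h ⊢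
  have h1 : Tendsto (fun w : ℂ => starRingEnd ℂ w) (𝓝[≠] x) (𝓝[≠] (starRingEnd ℂ x)) := by
    rw [nhdsWithin, nhdsWithin]
    refine Filter.Tendsto.inf (Complex.continuous_conj.tendsto x) ?_
    rw [tendsto_principal_principal]
    intro w hw
    simp only [Set.mem_compl_iff, Set.mem_singleton_iff] at hw ⊢
    exact fun hc => hw ((starRingEnd ℂ).injective hc)
  have h2 := (Complex.continuous_conj.tendsto c).comp (h.comp h1)
  refine h2.congr fun w => ?_
  simp only [Function.comp_apply, slope_def_field, map_div₀, map_sub, Complex.conj_conj]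

private lemma diffAt_conj_conj {f : ℂ → ℂ} {x : ℂ}
    (h : DifferentiableAt ℂ f (starRingEnd ℂ x)) :
    DifferentiableAt ℂ (fun z => starRingEnd ℂ (f (starRingEnd ℂ z))) x :=
  (hasDerivAt_conj_conj h.hasDerivAt).differentiableAt

/-- Calabi rigidity, key step: a hermitian kernel `K(z,w) = ∑_k f_k(z) f_k(w)̄`
built from holomorphic functions on a connected open set `G` (holomorphic in
`z`, anti-holomorphic in `w`) is determined by its values on the diagonal:
if `K_f(z,z) = K_g(z,z)` for all `z ∈ G`, then `K_f = K_g` on `G × G`. -/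
theorem kernel_determined_by_diagonal
    (G : Set ℂ) (hG : IsOpen G) (hGc : IsConnected G)
    (f g : ℕ → ℂ → ℂ)
    (hf : ∀ k, DifferentiableOn ℂ (f k) G)
    (hg : ∀ k, DifferentiableOn ℂ (g k) G)
    (Kf Kg : ℂ → ℂ → ℂ)
    (hKf : ∀ z w, Kf z w = ∑' k, f k z * starRingEnd ℂ (f k w))
    (hKg : ∀ z w, Kg z w = ∑' k, g k z * starRingEnd ℂ (g k w))
    (hconvf : TendstoLocallyUniformlyOn
      (fun N p => ∑ k ∈ Finset.range N, f k p.1 * starRingEnd ℂ (f k p.2))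
      (fun p : ℂ × ℂ => Kf p.1 p.2) atTop (G ×ˢ G))
    (hconvg : TendstoLocallyUniformlyOn
      (fun N p => ∑ k ∈ Finset.range N, g k p.1 * starRingEnd ℂ (g k p.2))
      (fun p : ℂ × ℂ => Kg p.1 p.2) atTop (G ×ˢ G))
    (hdiag : ∀ z ∈ G, Kf z z = Kg z z) :
    ∀ z ∈ G, ∀ w ∈ G, Kf z w = Kg z w := by
  intro z0 hz0 w0 hw0
  set c : ℂ →+* ℂ := starRingEnd ℂ with hc
  -- The difference kernel and its partial sums
  set Q : ℕ → ℂ × ℂ → ℂ := fun N p =>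
    (∑ k ∈ Finset.range N, f k p.1 * c (f k p.2)) -
    (∑ k ∈ Finset.range N, g k p.1 * c (g k p.2)) with hQdef
  set D : ℂ → ℂ → ℂ := fun z w => Kf z w - Kg z w with hD
  have hQ : TendstoLocallyUniformlyOn Q (fun p => D p.1 p.2) atTop (G ×ˢ G) :=
    tluo_sub hconvf hconvg
  obtain ⟨ε, hε, hball⟩ := Metric.isOpen_iff.1 hG z0 hz0
  -- Step 1: for `a` close to `z0` and `t` small, `D (a+t) (a + conj t) = 0`.
  have step1 : ∀ a ∈ Metric.ball z0 (ε/2), ∀ t ∈ Metric.ball (0:ℂ) (ε/2),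
      D (a + t) (a + c t) = 0 := by
    intro a ha
    have hmem : ∀ t : ℂ, t ∈ Metric.ball (0:ℂ) (ε/2) → a + t ∈ G := by
      intro t ht
      apply hball
      rw [Metric.mem_ball] at *
      calc dist (a + t) z0 ≤ dist (a + t) a + dist a z0 := dist_triangle _ _ _
        _ < ε/2 + ε/2 := by
            refine add_lt_add_of_lt_of_lt ?_ ha
            simpa [Complex.dist_eq] using ht
        _ = ε := by ring
    have hmem' : ∀ t : ℂ, t ∈ Metric.ball (0:ℂ) (ε/2) → a + c t ∈ G := by
      intro t ht
      refine hmem (c t) ?_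
      simpa [Metric.mem_ball, Complex.dist_eq] using ht
    set φ : ℂ → ℂ × ℂ := fun t => (a + t, a + c t) with hφ
    have hmaps : Set.MapsTo φ (Metric.ball (0:ℂ) (ε/2)) (G ×ˢ G) :=
      fun t ht => ⟨hmem t ht, hmem' t ht⟩
    have hcont : ContinuousOn φ (Metric.ball (0:ℂ) (ε/2)) :=
      ((continuous_const.add continuous_id).prodMk
        (continuous_const.add Complex.continuous_conj)).continuousOn
    have htlu := hQ.comp φ hmaps hcont
    have hdiff : DifferentiableOn ℂ (fun t => D (a + t) (a + c t)) (Metric.ball (0:ℂ) (ε/2)) := by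
      have hdq : ∀ N : ℕ, DifferentiableOn ℂ (Q N ∘ φ) (Metric.ball (0:ℂ) (ε/2)) := by
        intro N t ht
        apply DifferentiableAt.differentiableWithinAt
        have term1 : ∀ (F : ℕ → ℂ → ℂ), (∀ k, DifferentiableOn ℂ (F k) G) →
            DifferentiableAt ℂ (fun t => ∑ k ∈ Finset.range N, F k (a + t) * c (F k (a + c t))) t := by
          intro F hF
          apply DifferentiableAt.fun_sum
          intro k _
          have u1 : DifferentiableAt ℂ (fun t => F k (a + t)) t :=
            ((hF k).differentiableAt (hG.mem_nhds (hmem t ht))).comp t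
              ((differentiableAt_const a).add differentiableAt_id)
          have u2 : DifferentiableAt ℂ (fun t => c (F k (a + c t))) t := by
            have hbase : DifferentiableAt ℂ (fun s => F k (a + s)) (c t) :=
              ((hF k).differentiableAt (hG.mem_nhds (hmem' t ht))).comp (c t)
                ((differentiableAt_const a).add differentiableAt_id)
            exact diffAt_conj_conj hbase
          exact u1.mul u2
        exact ((term1 f hf).sub (term1 g hg))
      exact htlu.differentiableOn (Filter.Eventually.of_forall hdq) Metric.isOpen_ball
    -- identity theorem on the ball: the function vanishes for small real t
    have hzero : Set.EqOn (fun t => D (a + t) (a + c t)) 0 (Metric.ball (0:ℂ) (ε/2)) := by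
      have hA : AnalyticOnNhd ℂ (fun t => D (a + t) (a + c t)) (Metric.ball (0:ℂ) (ε/2)) :=
        hdiff.analyticOnNhd Metric.isOpen_ball
      refine hA.eqOn_zero_of_preconnected_of_frequently_eq_zero
        (convex_ball (0:ℂ) (ε/2)).isPreconnected
        (Metric.mem_ball_self (by positivity)) ?_
      set u : ℕ → ℂ := fun n => ((ε/4) / (n+1) : ℝ) with hu
      have hupos : ∀ n : ℕ, (0:ℝ) < (ε/4) / (n+1) := by
        intro n; positivity
      have hmemu : ∀ n : ℕ, (ε/4) / (n+1) < ε/2 := by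
        intro n
        have h1 : ((ε/4) / (n+1) : ℝ) ≤ ε/4 := by
          rw [div_le_iff₀ (by positivity)]
          nlinarith [hupos n, Nat.cast_nonneg (α := ℝ) n]
        linarith
      have htend : Tendsto u atTop (𝓝[≠] (0:ℂ)) := by
        rw [tendsto_nhdsWithin_iff]
        constructor
        · have hr : Tendsto (fun n : ℕ => ((ε/4) / (n+1) : ℝ)) atTop (𝓝 0) := by
            simpa [div_eq_mul_inv] using (tendsto_one_div_add_atTop_nhds_zero_nat).const_mul (ε/4)
          have h0 : Tendsto u atTop (𝓝 ((0:ℝ):ℂ)) :=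
            (Complex.continuous_ofReal.tendsto 0).comp hr
          rwa [Complex.ofReal_zero] at h0
        · refine Filter.Eventually.of_forall fun n => ?_
          simp only [Set.mem_compl_iff, Set.mem_singleton_iff, hu]
          exact_mod_cast (hupos n).ne'
      refine htend.frequently (Filter.Frequently.of_forall fun n => ?_)
      have hsr : (c (u n) : ℂ) = u n := by
        simp only [hu]
        exact Complex.conj_ofReal _
      have hball2 : u n ∈ Metric.ball (0:ℂ) (ε/2) := by
        simp only [Metric.mem_ball, Complex.dist_eq, hu, sub_zero]
        rw [show ‖((((ε/4)/(n+1) : ℝ)) : ℂ)‖ = |(ε/4)/(n+1)| from Complex.norm_real _, abs_of_pos (hupos n)]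
        exact hmemu n
      have : a + u n ∈ G := hmem _ hball2
      show D (a + u n) (a + c (u n)) = 0
      rw [hsr, hD]
      simp only
      rw [hdiag _ this, sub_self]
    intro t ht
    exact hzero ht
  -- Step 2: `D z0 w = 0` for all `w ∈ G`, via the antiholomorphic slice.
  have step2 : ∀ w ∈ G, D z0 w = 0 := by
    -- the conjugated slice is holomorphic in `w` on `G`
    have hslice : DifferentiableOn ℂ (fun w => c (D z0 w)) G := by
      have hmaps : Set.MapsTo (fun w : ℂ => (z0, w)) G (G ×ˢ G) := fun w hw => ⟨hz0, hw⟩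
      have htlu := tluo_conj (hQ.comp (fun w => (z0, w)) hmaps
        (continuous_const.prodMk continuous_id).continuousOn)
      have hdq : ∀ N : ℕ, DifferentiableOn ℂ
          (fun w => c ((Q N ∘ fun w => (z0, w)) w)) G := by
        intro N
        have heq : (fun w => c ((Q N ∘ fun w => (z0, w)) w)) =
            fun w => (∑ k ∈ Finset.range N, c (f k z0) * f k w) -
              (∑ k ∈ Finset.range N, c (g k z0) * g k w) := by
          funext w
          simp [hQdef, Function.comp, map_sub, map_sum, map_mul, Complex.conj_conj]
        rw [heq]
        refine DifferentiableOn.sub ?_ ?_ <;>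
        · apply DifferentiableOn.fun_sum
          intro k _
          exact (differentiableOn_const _).mul (by first | exact hf k | exact hg k)
      exact htlu.differentiableOn (Filter.Eventually.of_forall hdq) hG
    have hA : AnalyticOnNhd ℂ (fun w => c (D z0 w)) G := hslice.analyticOnNhd hG
    have hzero : Set.EqOn (fun w => c (D z0 w)) 0 G := by
      refine hA.eqOn_zero_of_preconnected_of_frequently_eq_zero hGc.isPreconnected hz0 ?_
      set u : ℕ → ℂ := fun n => z0 + (2 * ((ε/8) / (n+1) : ℝ)) * Complex.I with hu
      have hupos : ∀ n : ℕ, (0:ℝ) < (ε/8) / (n+1) := by intro n; positivity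
      have htend : Tendsto u atTop (𝓝[≠] z0) := by
        rw [tendsto_nhdsWithin_iff]
        constructor
        · have hr : Tendsto (fun n : ℕ => ((ε/8) / (n+1) : ℝ)) atTop (𝓝 0) := by
            simpa [div_eq_mul_inv] using (tendsto_one_div_add_atTop_nhds_zero_nat).const_mul (ε/8)
          have h2 : Tendsto (fun n : ℕ => (((ε/8) / (n+1) : ℝ) : ℂ)) atTop (𝓝 ((0:ℝ):ℂ)) :=
            (Complex.continuous_ofReal.tendsto 0).comp hr
          rw [Complex.ofReal_zero] at h2
          have h3 : Tendsto u atTop (𝓝 (z0 + (2 * (0:ℂ)) * Complex.I)) := by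
            apply Tendsto.add tendsto_const_nhds
            exact (Tendsto.const_mul 2 h2).mul_const _
          simpa using h3
        · refine Filter.Eventually.of_forall fun n => ?_
          simp only [Set.mem_compl_iff, Set.mem_singleton_iff, hu]
          intro hcontra
          have : (2 * ((ε/8) / (n+1) : ℝ) : ℂ) * Complex.I = 0 := by
            have := sub_eq_zero.mpr hcontra
            linear_combination this
          simp only [mul_eq_zero, Complex.I_ne_zero, or_false, Complex.ofReal_eq_zero] at this
          rcases this with h | h
          · norm_num at h
          · exact absurd h (by exact_mod_cast (hupos n).ne')
      refine htend.frequently (Filter.Frequently.of_forall fun n => ?_)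
      -- use step1 with a = z0 + s*I, t = -s*I
      set s : ℝ := (ε/8) / (n+1) with hs
      have hsmall : |s| < ε/2 := by
        rw [abs_of_pos (hupos n)]
        have h1 : (s : ℝ) ≤ ε/8 := by
          rw [hs, div_le_iff₀ (by positivity)]
          nlinarith [hupos n, Nat.cast_nonneg (α := ℝ) n]
        linarith
      have ha : (z0 + (s:ℂ) * Complex.I) ∈ Metric.ball z0 (ε/2) := by
        simp only [Metric.mem_ball, Complex.dist_eq, add_sub_cancel_left]
        have : ‖(s:ℂ) * Complex.I‖ = |s| := by simp
        rw [this]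
        exact hsmall
      have ht : (-(s:ℂ) * Complex.I) ∈ Metric.ball (0:ℂ) (ε/2) := by
        simp only [Metric.mem_ball, Complex.dist_eq, sub_zero]
        have : ‖-(s:ℂ) * Complex.I‖ = |s| := by simp
        rw [this]
        exact hsmall
      have key := step1 _ ha _ ht
      have e1 : z0 + (s:ℂ) * Complex.I + -(s:ℂ) * Complex.I = z0 := by ring
      have e2 : z0 + (s:ℂ) * Complex.I + c (-(s:ℂ) * Complex.I) = u n := by
        rw [map_mul, map_neg, Complex.conj_I, Complex.conj_ofReal]
        rw [hu, hs]
        push_cast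
        ring
      rw [e1, e2] at key
      show c (D z0 (u n)) = 0
      rw [key, map_zero]
    intro w hw
    have := hzero hw
    simp only [Pi.zero_apply] at this
    have h2 := congrArg c this
    rwa [Complex.conj_conj, map_zero] at h2
  have := step2 w0 hw0
  rw [hD] at this
  exact sub_eq_zero.mp this
end

section
/- With X_j independent Bernoulli with success probability ρ^{2j}, the probability that ∑_{j=1}^∞ X_j = 0 equals ∏_{j=1}^∞ (1 - ρ^{2j}), and as ρ → 1⁻, log ∏_{j=1}^∞ (1 - ρ^{2j}) = -(π² + o(1))/(6(1-ρ²)). Consequently the hole probability satisfies P(N = 0) = exp(-(π²/12 + o(1))/(1-ρ)). -/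
open MeasureTheory ProbabilityTheory Filter Real

noncomputable def Mq (q : ℝ) : ℝ :=
  ∑' k : ℕ, q ^ (k + 1) / (((k : ℝ) + 1) * (1 - q ^ (k + 1)))

lemma bh_row {q : ℝ} (hq0 : 0 ≤ q) (hq1 : q < 1) (j : ℕ) :
    HasSum (fun k : ℕ => q ^ ((j + 1) * (k + 1)) / ((k : ℝ) + 1))
      (-Real.log (1 - q ^ (j + 1))) := by
  have hx : |q ^ (j + 1)| < 1 := by
    rw [abs_of_nonneg (pow_nonneg hq0 _)]
    exact pow_lt_one₀ hq0 hq1 (Nat.succ_ne_zero j)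
  have h := hasSum_pow_div_log_of_abs_lt_one hx
  refine h.congr_fun fun k => ?_
  rw [← pow_mul]

lemma bh_col {q : ℝ} (hq0 : 0 ≤ q) (hq1 : q < 1) (k : ℕ) :
    HasSum (fun j : ℕ => q ^ ((j + 1) * (k + 1)) / ((k : ℝ) + 1))
      (q ^ (k + 1) / (((k : ℝ) + 1) * (1 - q ^ (k + 1)))) := by
  have hy0 : 0 ≤ q ^ (k + 1) := pow_nonneg hq0 _
  have hy1 : q ^ (k + 1) < 1 := pow_lt_one₀ hq0 hq1 (Nat.succ_ne_zero k)
  have hg : HasSum (fun j : ℕ => (q ^ (k + 1)) ^ j) (1 - q ^ (k + 1))⁻¹ :=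
    hasSum_geometric_of_lt_one hy0 hy1
  have h := hg.mul_left (q ^ (k + 1) / ((k : ℝ) + 1))
  have h2 : q ^ (k + 1) / ((k : ℝ) + 1) * (1 - q ^ (k + 1))⁻¹
      = q ^ (k + 1) / (((k : ℝ) + 1) * (1 - q ^ (k + 1))) := by
    rw [← div_eq_mul_inv, div_div]
  rw [h2] at h
  refine h.congr_fun fun j => ?_
  rw [mul_comm (j + 1), pow_mul, pow_succ, mul_comm ((q ^ (k+1)) ^ j)]
  ring

lemma bh_neg_log_le {x : ℝ} (h0 : 0 ≤ x) (h1 : x < 1) :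
    -Real.log (1 - x) ≤ x / (1 - x) := by
  have hx : 0 < 1 - x := by linarith
  have := Real.log_le_sub_one_of_pos (inv_pos.mpr hx)
  rw [Real.log_inv] at this
  have h2 : (1 - x)⁻¹ - 1 = x / (1 - x) := by field_simp; ring
  linarith [h2 ▸ this]

lemma bh_summable_neg_log {q : ℝ} (hq0 : 0 ≤ q) (hq1 : q < 1) :
    Summable fun j : ℕ => -Real.log (1 - q ^ (j + 1)) := by
  have hsg : Summable fun j : ℕ => (1 - q)⁻¹ * (q * q ^ j) :=
    ((summable_geometric_of_lt_one hq0 hq1).mul_left q).mul_left _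
  refine Summable.of_nonneg_of_le (fun j => ?_) (fun j => ?_) hsg
  · have h1 : q ^ (j + 1) < 1 := pow_lt_one₀ hq0 hq1 (Nat.succ_ne_zero j)
    have h0 : 0 ≤ q ^ (j + 1) := pow_nonneg hq0 _
    have := Real.log_nonpos (x := 1 - q ^ (j + 1)) (by linarith) (by linarith)
    linarith
  · have h1 : q ^ (j + 1) < 1 := pow_lt_one₀ hq0 hq1 (Nat.succ_ne_zero j)
    have h0 : 0 ≤ q ^ (j + 1) := pow_nonneg hq0 _
    have hle : -Real.log (1 - q ^ (j + 1)) ≤ q ^ (j + 1) / (1 - q ^ (j + 1)) :=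
      bh_neg_log_le h0 h1
    have hq' : q ^ (j + 1) ≤ q := by
      calc q ^ (j + 1) ≤ q ^ 1 := pow_le_pow_of_le_one hq0 hq1.le (by omega)
      _ = q := pow_one q
    have hd : 1 - q ≤ 1 - q ^ (j + 1) := by linarith
    have hq2 : 0 < 1 - q := by linarith
    have : q ^ (j + 1) / (1 - q ^ (j + 1)) ≤ q ^ (j + 1) / (1 - q) := by
      gcongr
    calc -Real.log (1 - q ^ (j + 1)) ≤ q ^ (j + 1) / (1 - q) := le_trans hle this
    _ = (1 - q)⁻¹ * (q * q ^ j) := by rw [pow_succ]; ring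

lemma bh_hasSum_log {q : ℝ} (hq0 : 0 ≤ q) (hq1 : q < 1) :
    HasSum (fun j : ℕ => Real.log (1 - q ^ (j + 1))) (-Mq q) := by
  have hrow := fun j => bh_row hq0 hq1 j
  have hcol := fun k => bh_col hq0 hq1 k
  have hnl := bh_summable_neg_log hq0 hq1
  set f : ℕ → ℕ → ℝ := fun j k => q ^ ((j + 1) * (k + 1)) / ((k : ℝ) + 1) with hf
  have hunc : Summable (Function.uncurry f) := by
    rw [summable_prod_of_nonneg]
    · constructor
      · exact fun j => (hrow j).summable
      · refine hnl.congr fun j => ?_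
        exact ((hrow j).tsum_eq).symm
    · rw [Pi.le_def]
      rintro ⟨j, k⟩
      simp only [Function.uncurry_apply_pair, hf]
      have : 0 ≤ q ^ ((j + 1) * (k + 1)) := pow_nonneg hq0 _
      positivity
  have hswap : ∑' (k) (j), f j k = ∑' (j) (k), f j k :=
    Summable.tsum_comm' hunc (fun j => (hrow j).summable) (fun k => (hcol k).summable)
  have key : HasSum (fun j : ℕ => -Real.log (1 - q ^ (j + 1))) (Mq q) := by
    have h1 : ∑' j, -Real.log (1 - q ^ (j + 1)) = Mq q := by
      calc ∑' j : ℕ, -Real.log (1 - q ^ (j + 1)) = ∑' (j) (k), f j k :=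
            tsum_congr fun j => ((hrow j).tsum_eq).symm
      _ = ∑' (k) (j), f j k := hswap.symm
      _ = Mq q := tsum_congr fun k => (hcol k).tsum_eq
    exact h1 ▸ hnl.hasSum
  simpa using key.neg

lemma bh_hasProd {q : ℝ} (hq0 : 0 ≤ q) (hq1 : q < 1) :
    HasProd (fun j : ℕ => 1 - q ^ (j + 1)) (Real.exp (-Mq q)) := by
  have hpos : ∀ j : ℕ, 0 < 1 - q ^ (j + 1) := fun j => by
    have : q ^ (j + 1) < 1 := pow_lt_one₀ hq0 hq1 (by omega)
    linarith
  have h := bh_hasSum_log hq0 hq1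
  have h2 := (Real.continuous_exp.tendsto _).comp h
  refine h2.congr fun s => ?_
  rw [Function.comp_apply, Real.exp_sum]
  exact Finset.prod_congr rfl fun j _ => Real.exp_log (hpos j)

lemma bh_log_tprod {q : ℝ} (hq0 : 0 ≤ q) (hq1 : q < 1) :
    Real.log (∏' j : ℕ, (1 - q ^ (j + 1))) = -Mq q := by
  rw [(bh_hasProd hq0 hq1).tprod_eq, Real.log_exp]

lemma bh_basel : HasSum (fun k : ℕ => 1 / ((k : ℝ) + 1) ^ 2) (Real.pi ^ 2 / 6) := by
  have h := hasSum_zeta_two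
  have h2 := (hasSum_nat_add_iff' (f := fun n : ℕ => (1 : ℝ) / (n : ℝ) ^ 2) 1).mpr h
  simp only [Finset.range_one, Finset.sum_singleton, Nat.cast_zero] at h2
  norm_num at h2
  refine h2.congr_fun fun k => ?_
  push_cast
  ring

lemma bh_mem_Ioo : Set.Ioo (0 : ℝ) 1 ∈ nhdsWithin (1 : ℝ) (Set.Iio 1) :=
  Ioo_mem_nhdsLT_of_mem (by norm_num : (1 : ℝ) ∈ Set.Ioc 0 1)

lemma bh_tendsto_Mq :
    Tendsto (fun q : ℝ => (1 - q) * Mq q) (nhdsWithin 1 (Set.Iio 1))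
      (nhds (Real.pi ^ 2 / 6)) := by
  set G : ℝ → ℕ → ℝ := fun q k =>
    q ^ (k + 1) / (((k : ℝ) + 1) * ∑ i ∈ Finset.range (k + 1), q ^ i) with hG
  have hsum1 : ∀ k : ℕ, ∑ i ∈ Finset.range (k + 1), (1 : ℝ) ^ i = (k : ℝ) + 1 := by
    intro k
    simp only [one_pow, Finset.sum_const, Finset.card_range, nsmul_eq_mul, mul_one]
    push_cast
    ring
  have hbound : Summable (fun k : ℕ => 1 / ((k : ℝ) + 1) ^ 2) := bh_basel.summable
  have key : Tendsto (fun q : ℝ => ∑' k, G q k) (nhdsWithin 1 (Set.Iio 1))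
      (nhds (∑' k : ℕ, 1 / ((k : ℝ) + 1) ^ 2)) := by
    refine tendsto_tsum_of_dominated_convergence hbound (fun k => ?_) ?_
    · have hnum : Tendsto (fun q : ℝ => q ^ (k + 1)) (nhds 1) (nhds 1) := by
        simpa using ((continuous_pow (k + 1) : Continuous fun q : ℝ => q ^ (k + 1)).tendsto 1)
      have hden : Tendsto (fun q : ℝ => ((k : ℝ) + 1) * ∑ i ∈ Finset.range (k + 1), q ^ i)
          (nhds 1) (nhds (((k : ℝ) + 1) * (((k : ℝ) + 1)))) := by
        have hc : Continuous fun q : ℝ => ((k : ℝ) + 1) * ∑ i ∈ Finset.range (k + 1), q ^ i :=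
          continuous_const.mul (continuous_finset_sum _ fun i _ => continuous_pow i)
        have h1 := hc.tendsto 1
        rwa [hsum1 k] at h1
      have hne : ((k : ℝ) + 1) * ((k : ℝ) + 1) ≠ 0 := by positivity
      have h : Tendsto (fun q : ℝ => q ^ (k + 1) / (((k : ℝ) + 1) * ∑ i ∈ Finset.range (k + 1), q ^ i))
          (nhdsWithin 1 (Set.Iio 1)) (nhds (1 / (((k : ℝ) + 1) * ((k : ℝ) + 1)))) :=
        (hnum.div hden hne).mono_left nhdsWithin_le_nhds
      have hv : (1 : ℝ) / (((k : ℝ) + 1) * ((k : ℝ) + 1)) = 1 / ((k : ℝ) + 1) ^ 2 := by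
        rw [sq]
      rwa [hv] at h
    · filter_upwards [bh_mem_Ioo] with q hq k
      obtain ⟨hq0, hq1⟩ := hq
      have hSk : ((k : ℝ) + 1) * q ^ k ≤ ∑ i ∈ Finset.range (k + 1), q ^ i := by
        calc ((k : ℝ) + 1) * q ^ k = ∑ _i ∈ Finset.range (k + 1), q ^ k := by
              simp only [Finset.sum_const, Finset.card_range, nsmul_eq_mul]
              push_cast
              ring
        _ ≤ ∑ i ∈ Finset.range (k + 1), q ^ i :=
              Finset.sum_le_sum fun i hi =>
                pow_le_pow_of_le_one hq0.le hq1.le (Nat.lt_succ_iff.mp (Finset.mem_range.mp hi))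
      have hS0 : (0 : ℝ) < ∑ i ∈ Finset.range (k + 1), q ^ i :=
        lt_of_lt_of_le (by positivity) hSk
      have hGnn : 0 ≤ G q k := by
        have h0 : (0:ℝ) ≤ q ^ (k+1) := by positivity
        have : (0:ℝ) < ((k : ℝ) + 1) * ∑ i ∈ Finset.range (k + 1), q ^ i := by positivity
        exact div_nonneg h0 this.le
      rw [Real.norm_eq_abs, abs_of_nonneg hGnn]
      have h1 : G q k ≤ q ^ (k + 1) / (((k : ℝ) + 1) * (((k : ℝ) + 1) * q ^ k)) := by
        simp only [hG]
        gcongr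
      have h2 : q ^ (k + 1) / (((k : ℝ) + 1) * (((k : ℝ) + 1) * q ^ k))
          = q / ((k : ℝ) + 1) ^ 2 := by
        have hqk : (q : ℝ) ^ k ≠ 0 := pow_ne_zero _ (ne_of_gt hq0)
        rw [pow_succ]
        field_simp
      have h3 : q / ((k : ℝ) + 1) ^ 2 ≤ 1 / ((k : ℝ) + 1) ^ 2 := by gcongr
      calc G q k ≤ q ^ (k + 1) / (((k : ℝ) + 1) * (((k : ℝ) + 1) * q ^ k)) := h1
      _ = q / ((k : ℝ) + 1) ^ 2 := h2
      _ ≤ 1 / ((k : ℝ) + 1) ^ 2 := h3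
  rw [← bh_basel.tsum_eq]
  refine Tendsto.congr' ?_ key
  filter_upwards [bh_mem_Ioo] with q hq
  obtain ⟨hq0, hq1⟩ := hq
  simp only [Mq]
  rw [← tsum_mul_left]
  refine tsum_congr fun k => ?_
  have hgeom : (1 : ℝ) - q ^ (k + 1) = (1 - q) * ∑ i ∈ Finset.range (k + 1), q ^ i := by
    have h := geom_sum_mul q (k + 1)
    linear_combination h
  have hSk : ((k : ℝ) + 1) * q ^ k ≤ ∑ i ∈ Finset.range (k + 1), q ^ i := by
    calc ((k : ℝ) + 1) * q ^ k = ∑ _i ∈ Finset.range (k + 1), q ^ k := by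
          simp only [Finset.sum_const, Finset.card_range, nsmul_eq_mul]
          push_cast
          ring
    _ ≤ ∑ i ∈ Finset.range (k + 1), q ^ i :=
          Finset.sum_le_sum fun i hi =>
            pow_le_pow_of_le_one hq0.le hq1.le (Nat.lt_succ_iff.mp (Finset.mem_range.mp hi))
  have hS0 : (0 : ℝ) < ∑ i ∈ Finset.range (k + 1), q ^ i := lt_of_lt_of_le (by positivity) hSk
  have h1q : (1 : ℝ) - q ≠ 0 := by linarith
  have hS0' : (∑ i ∈ Finset.range (k + 1), q ^ i) ≠ 0 := ne_of_gt hS0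
  simp only [hG]
  rw [hgeom]
  field_simp

lemma bh_part2 :
    Tendsto (fun r : ℝ => (1 - r ^ 2) * Real.log (∏' j : ℕ, (1 - r ^ (2 * (j + 1)))))
      (nhdsWithin 1 (Set.Iio 1)) (nhds (-(Real.pi ^ 2 / 6))) := by
  have hsq : Tendsto (fun r : ℝ => r ^ 2) (nhdsWithin 1 (Set.Iio 1))
      (nhdsWithin 1 (Set.Iio 1)) := by
    rw [tendsto_nhdsWithin_iff]
    constructor
    · exact (((continuous_pow 2 : Continuous fun r : ℝ => r ^ 2).tendsto' 1 1 (by norm_num))).mono_left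
        nhdsWithin_le_nhds
    · filter_upwards [bh_mem_Ioo] with r hr
      exact Set.mem_Iio.mpr (by nlinarith [hr.1, hr.2])
  have h := (bh_tendsto_Mq.comp hsq).neg
  refine Tendsto.congr' ?_ h
  filter_upwards [bh_mem_Ioo] with r hr
  have hq0 : (0 : ℝ) ≤ r ^ 2 := sq_nonneg r
  have hq1 : r ^ 2 < 1 := by nlinarith [hr.1, hr.2]
  have hpr : (∏' j : ℕ, (1 - r ^ (2 * (j + 1)))) = ∏' j : ℕ, (1 - (r ^ 2) ^ (j + 1)) :=
    tprod_congr fun j => by rw [pow_mul]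
  show -((1 - r ^ 2) * Mq (r ^ 2)) = _
  rw [hpr, bh_log_tprod hq0 hq1]
  ring

lemma bh_part3 :
    Tendsto (fun r : ℝ => (1 - r) * Real.log (∏' j : ℕ, (1 - r ^ (2 * (j + 1)))))
      (nhdsWithin 1 (Set.Iio 1)) (nhds (-(Real.pi ^ 2 / 12))) := by
  have hinv : Tendsto (fun r : ℝ => (1 + r)⁻¹) (nhdsWithin 1 (Set.Iio 1))
      (nhds (2 : ℝ)⁻¹) := by
    have hc : Tendsto (fun r : ℝ => (1 + r)⁻¹) (nhds 1) (nhds ((1 + 1 : ℝ))⁻¹) :=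
      ((tendsto_const_nhds.add tendsto_id).inv₀ (by norm_num))
    have hc2 : Tendsto (fun r : ℝ => (1 + r)⁻¹) (nhds 1) (nhds (2 : ℝ)⁻¹) := by
      convert hc using 2
      norm_num
    exact hc2.mono_left nhdsWithin_le_nhds
  have h := bh_part2.mul hinv
  have hval : -(Real.pi ^ 2 / 6) * (2 : ℝ)⁻¹ = -(Real.pi ^ 2 / 12) := by ring
  rw [hval] at h
  refine Tendsto.congr' ?_ h
  filter_upwards [bh_mem_Ioo] with r hr
  have h1r : (1 : ℝ) + r ≠ 0 := by linarith [hr.1]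
  field_simp
  ring

lemma bh_part1 {Ω : Type*} [MeasurableSpace Ω] (P : Measure Ω) [IsProbabilityMeasure P]
    (ρ : ℝ) (hρ : ρ ∈ Set.Ioo (0 : ℝ) 1)
    (X : ℕ → Ω → ℝ) (hmeas : ∀ j, Measurable (X j))
    (hind : iIndepFun X P)
    (hval : ∀ j ω, X j ω = 0 ∨ X j ω = 1)
    (hdist : ∀ j, P {ω | X j ω = 1} = ENNReal.ofReal (ρ ^ (2 * (j + 1)))) :
    P {ω | (∑' j, X j ω) = 0}
      = ENNReal.ofReal (∏' j : ℕ, (1 - ρ ^ (2 * (j + 1)))) := by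
  obtain ⟨hρ0, hρ1⟩ := hρ
  set q : ℝ := ρ ^ 2 with hq
  have hq0 : (0 : ℝ) ≤ q := sq_nonneg ρ
  have hq1 : q < 1 := by nlinarith
  have hexp : ∀ j : ℕ, ρ ^ (2 * (j + 1)) = q ^ (j + 1) := fun j => pow_mul ρ 2 (j + 1)
  set a : ℕ → ℝ := fun j => 1 - q ^ (j + 1) with ha
  have hapos : ∀ j, 0 < a j := fun j => by
    have : q ^ (j + 1) < 1 := pow_lt_one₀ hq0 hq1 (by omega)
    simp only [ha]; linarith
  set S : ℕ → Set Ω := fun j => X j ⁻¹' {0} with hS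
  -- probability of each S j
  have hcompl : ∀ j, S j = {ω | X j ω = 1}ᶜ := by
    intro j
    ext ω
    simp only [hS, Set.mem_preimage, Set.mem_singleton_iff, Set.mem_compl_iff,
      Set.mem_setOf_eq]
    constructor
    · intro h h1
      rw [h1] at h
      exact one_ne_zero h
    · intro h
      rcases hval j ω with h0 | h1
      · exact h0
      · exact absurd h1 h
  have hPS : ∀ j, P (S j) = ENNReal.ofReal (a j) := by
    intro j
    have hm : MeasurableSet {ω | X j ω = 1} := (hmeas j) (measurableSet_singleton 1)
    rw [hcompl j, prob_compl_eq_one_sub hm, hdist j, hexp j, ← ENNReal.ofReal_one,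
      ← ENNReal.ofReal_sub _ (pow_nonneg hq0 _)]
  -- independence: finite intersections
  have hT : ∀ n, P (⋂ j ∈ Finset.range n, S j) = ∏ j ∈ Finset.range n, P (S j) := by
    intro n
    exact hind.meas_biInter fun j _ => ⟨{0}, measurableSet_singleton 0, rfl⟩
  set T : ℕ → Set Ω := fun n => ⋂ j ∈ Finset.range n, S j with hTdef
  have hTanti : Antitone T := by
    intro m n hmn ω hω
    simp only [hTdef, Set.mem_iInter, Finset.mem_range] at hω ⊢
    intro j hj
    exact hω j (lt_of_lt_of_le hj hmn)
  have hiInter : ⋂ n, T n = ⋂ j, S j := by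
    ext ω
    simp only [hTdef, Set.mem_iInter, Finset.mem_range]
    constructor
    · intro h j
      exact h (j + 1) j (Nat.lt_succ_self j)
    · intro h n j _
      exact h j
  have hTmeas : ∀ n, MeasurableSet (T n) :=
    fun n => MeasurableSet.biInter (Finset.range n).countable_toSet
      fun j _ => (hmeas j) (measurableSet_singleton 0)
  have hTend : Tendsto (fun n => P (T n)) atTop (nhds (P (⋂ j, S j))) := by
    have h := tendsto_measure_iInter_atTop (fun n => (hTmeas n).nullMeasurableSet) hTanti
      ⟨0, measure_ne_top P _⟩
    rwa [hiInter] at h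
  -- product convergence
  have hProd : HasProd a (Real.exp (-Mq q)) := bh_hasProd hq0 hq1
  have h1 : Tendsto (fun n => ∏ j ∈ Finset.range n, a j) atTop (nhds (∏' j, a j)) := by
    rw [hProd.tprod_eq]
    exact hProd.tendsto_prod_nat
  have h2 : Tendsto (fun n => ENNReal.ofReal (∏ j ∈ Finset.range n, a j)) atTop
      (nhds (ENNReal.ofReal (∏' j, a j))) :=
    (ENNReal.continuous_ofReal.tendsto _).comp h1
  have h3 : ∀ n, P (T n) = ENNReal.ofReal (∏ j ∈ Finset.range n, a j) := by
    intro n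
    rw [hTdef]
    rw [hT n, ENNReal.ofReal_prod_of_nonneg fun j _ => (hapos j).le]
    exact Finset.prod_congr rfl fun j _ => hPS j
  have hPA : P (⋂ j, S j) = ENNReal.ofReal (∏' j, a j) :=
    tendsto_nhds_unique (hTend.congr h3) h2
  -- the bad event
  set C : Set Ω := {ω | {j | X j ω = 1}.Infinite} with hC
  have hC0 : P C = 0 := by
    have hCl : C = Filter.limsup (fun j => {ω | X j ω = 1}) Filter.cofinite :=
      (Filter.cofinite.limsup_set_eq).symm
    rw [hCl]
    apply measure_limsup_cofinite_eq_zero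
    have hsumq : Summable fun j : ℕ => ρ ^ (2 * (j + 1)) := by
      refine Summable.congr ?_ fun j => (hexp j).symm
      refine Summable.congr (((summable_geometric_of_lt_one hq0 hq1).mul_left q)) fun j => ?_
      rw [← pow_succ']
    calc ∑' j, P {ω | X j ω = 1} = ∑' j, ENNReal.ofReal (ρ ^ (2 * (j + 1))) :=
          tsum_congr fun j => hdist j
    _ = ENNReal.ofReal (∑' j, ρ ^ (2 * (j + 1))) :=
          (ENNReal.ofReal_tsum_of_nonneg (fun j => by positivity) hsumq).symm
    _ ≠ ⊤ := ENNReal.ofReal_ne_top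
  -- relating the events
  have hsub1 : (⋂ j, S j) ⊆ {ω | (∑' j, X j ω) = 0} := by
    intro ω hω
    simp only [Set.mem_iInter, hS, Set.mem_preimage, Set.mem_singleton_iff] at hω
    show (∑' j, X j ω) = 0
    calc ∑' j, X j ω = ∑' _ : ℕ, (0 : ℝ) := tsum_congr fun j => hω j
    _ = 0 := tsum_zero
  have hsub2 : {ω | (∑' j, X j ω) = 0} ⊆ (⋂ j, S j) ∪ C := by
    intro ω hω
    have hω' : (∑' j, X j ω) = 0 := hω
    by_cases hs : Summable fun j => X j ω
    · left
      simp only [Set.mem_iInter, hS, Set.mem_preimage, Set.mem_singleton_iff]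
      intro j
      have hnn : ∀ i, 0 ≤ X i ω := by
        intro i
        rcases hval i ω with h | h <;> rw [h] <;> norm_num
      have hle := Summable.le_tsum hs j fun i _ => hnn i
      rw [hω'] at hle
      exact le_antisymm hle (hnn j)
    · right
      show {j | X j ω = 1}.Infinite
      by_contra hfin
      rw [Set.not_infinite] at hfin
      apply hs
      apply summable_of_finite_support
      refine Set.Finite.subset hfin fun j hj => ?_
      rcases hval j ω with h | h
      · exact absurd h hj
      · exact h
  have hkey : P {ω | (∑' j, X j ω) = 0} = P (⋂ j, S j) := by
    refine le_antisymm ?_ (measure_mono hsub1)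
    calc P {ω | (∑' j, X j ω) = 0} ≤ P ((⋂ j, S j) ∪ C) := measure_mono hsub2
    _ ≤ P (⋂ j, S j) + P C := measure_union_le _ _
    _ = P (⋂ j, S j) := by rw [hC0, add_zero]
  rw [hkey, hPA]
  congr 1
  exact (tprod_congr fun j => by rw [hexp j]).symm

/-- With `X_j` independent Bernoulli of success probability `ρ^{2j}` (indexed
here by `j = j'+1`), the hole probability satisfies
`P(∑_j X_j = 0) = ∏_{j≥1} (1 - ρ^{2j})`; moreover, as `ρ → 1⁻`,
`log ∏_{j≥1} (1 - ρ^{2j}) = -(π²/6 + o(1))/(1-ρ²)`, and consequently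
`P(N = 0) = exp(-(π²/12 + o(1))/(1-ρ))`. -/
theorem bernoulli_hole_probability
    {Ω : Type*} [MeasurableSpace Ω] (P : Measure Ω) [IsProbabilityMeasure P]
    (ρ : ℝ) (hρ : ρ ∈ Set.Ioo (0 : ℝ) 1)
    (X : ℕ → Ω → ℝ) (hmeas : ∀ j, Measurable (X j))
    (hind : iIndepFun X P)
    (hval : ∀ j ω, X j ω = 0 ∨ X j ω = 1)
    (hdist : ∀ j, P {ω | X j ω = 1} = ENNReal.ofReal (ρ ^ (2 * (j + 1)))) :
    (P {ω | (∑' j, X j ω) = 0}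
        = ENNReal.ofReal (∏' j : ℕ, (1 - ρ ^ (2 * (j + 1))))) ∧
    Tendsto (fun r : ℝ => (1 - r ^ 2) * Real.log (∏' j : ℕ, (1 - r ^ (2 * (j + 1)))))
      (nhdsWithin 1 (Set.Iio 1)) (nhds (-(Real.pi ^ 2 / 6))) ∧
    Tendsto (fun r : ℝ => (1 - r) * Real.log (∏' j : ℕ, (1 - r ^ (2 * (j + 1)))))
      (nhdsWithin 1 (Set.Iio 1)) (nhds (-(Real.pi ^ 2 / 12))) :=
  ⟨bh_part1 P ρ hρ X hmeas hind hval hdist, bh_part2, bh_part3⟩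
end

section
/- Let f₀, f₁ be holomorphic on a domain G with |f₀|² + |f₁|² > 0 everywhere. Then the Laplacian of (1/2) log(|f₀|² + |f₁|²) equals 2|f₀'f₁ - f₀f₁'|²/(|f₀|² + |f₁|²)², wherever defined; i.e., the density of the pull-back Fubini–Study measure (1/2π)Δ log‖(f₀,f₁)‖ with respect to area measure is (1/π)|f₀'f₁ - f₀f₁'|²/(|f₀|²+|f₁|²)². -/
/-- The classical Laplacian of a function `φ : ℂ → ℝ` (sum of the second
derivatives in the directions `1` and `i`). -/
noncomputable def laplacian (φ : ℂ → ℝ) (z : ℂ) : ℝ :=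
  fderiv ℝ (fun w => fderiv ℝ φ w 1) z 1 +
    fderiv ℝ (fun w => fderiv ℝ φ w Complex.I) z Complex.I


open Complex ContinuousLinearMap in
/-- Multiplication by `c` on the right as an `ℝ`-linear map `ℂ →L[ℝ] ℂ`
(note: `Dc c v = v * c`). -/
noncomputable def Dc (c : ℂ) : ℂ →L[ℝ] ℂ := ((1 : ℂ →L[ℂ] ℂ).smulRight c).restrictScalars ℝ

@[simp] lemma Dc_apply (c v : ℂ) : Dc c v = v * c := by
  simp [Dc, smul_eq_mul]

set_option maxHeartbeats 2000000 in
open Complex ContinuousLinearMap in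
/-- Fubini–Study derivative formula (two-dimensional case): if `f₀, f₁` are
holomorphic on an open set `G` with no common zero, then
`Δ ((1/2) log(|f₀|² + |f₁|²)) = 2 |f₀'f₁ - f₀f₁'|² / (|f₀|² + |f₁|²)²` on `G`. -/
theorem laplacian_log_norm_two_functions
    (G : Set ℂ) (hG : IsOpen G)
    (f₀ f₁ : ℂ → ℂ) (hf₀ : DifferentiableOn ℂ f₀ G) (hf₁ : DifferentiableOn ℂ f₁ G)
    (hpos : ∀ z ∈ G, 0 < ‖f₀ z‖ ^ 2 + ‖f₁ z‖ ^ 2) :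
    ∀ z ∈ G,
      laplacian (fun w => (1 / 2 : ℝ) *
          Real.log (‖f₀ w‖ ^ 2 + ‖f₁ w‖ ^ 2)) z
        = 2 * ‖deriv f₀ z * f₁ z - f₀ z * deriv f₁ z‖ ^ 2 /
            (‖f₀ z‖ ^ 2 + ‖f₁ z‖ ^ 2) ^ 2 := by
  intro z hz
  set u : ℂ → ℝ := fun x => ‖f₀ x‖ ^ 2 + ‖f₁ x‖ ^ 2 with hu
  set A : ℂ → ℂ := fun x => (starRingEnd ℂ) (f₀ x) * deriv f₀ x
      + (starRingEnd ℂ) (f₁ x) * deriv f₁ x with hA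
  -- first derivative of the square of the norm along each component
  have key : ∀ f : ℂ → ℂ, DifferentiableOn ℂ f G → ∀ w ∈ G,
      HasFDerivAt (fun x => ‖f x‖ ^ 2)
        (2 • (innerSL ℝ (f w)).comp (Dc (deriv f w))) w := by
    intro f hf w hw
    have h2 : HasFDerivAt f (Dc (deriv f w)) w :=
      (hf.differentiableAt (hG.mem_nhds hw)).hasDerivAt.hasFDerivAt.restrictScalars ℝ
    exact h2.norm_sq
  have hU : ∀ w ∈ G, HasFDerivAt u
      (2 • (innerSL ℝ (f₀ w)).comp (Dc (deriv f₀ w))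
        + 2 • (innerSL ℝ (f₁ w)).comp (Dc (deriv f₁ w))) w := by
    intro w hw
    exact (key f₀ hf₀ w hw).add (key f₁ hf₁ w hw)
  have hφ : ∀ w ∈ G, HasFDerivAt
      (fun x => (1 / 2 : ℝ) * Real.log (u x))
      (((1 / 2 : ℝ)) • ((u w)⁻¹ •
        (2 • (innerSL ℝ (f₀ w)).comp (Dc (deriv f₀ w))
          + 2 • (innerSL ℝ (f₁ w)).comp (Dc (deriv f₁ w))))) w := by
    intro w hw
    exact ((Real.hasDerivAt_log (hpos w hw).ne').comp_hasFDerivAt w (hU w hw)).const_mul _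
  -- the first partial derivatives, as functions on G
  have hfd1 : ∀ w ∈ G,
      fderiv ℝ (fun x => (1 / 2 : ℝ) * Real.log (u x)) w 1 = (A w).re * (u w)⁻¹ := by
    intro w hw
    rw [(hφ w hw).fderiv]
    simp [hA, Complex.inner, smul_smul]
    ring
  have hfdI : ∀ w ∈ G,
      fderiv ℝ (fun x => (1 / 2 : ℝ) * Real.log (u x)) w Complex.I
        = -(A w).im * (u w)⁻¹ := by
    intro w hw
    rw [(hφ w hw).fderiv]
    simp [hA, Complex.inner, Complex.mul_re, smul_smul]
    ring
  -- rewrite the laplacian using these formulas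
  have e1 : (fun w => fderiv ℝ (fun x => (1 / 2 : ℝ) * Real.log (u x)) w 1)
      =ᶠ[nhds z] fun w => (A w).re * (u w)⁻¹ :=
    Filter.eventually_of_mem (hG.mem_nhds hz) (fun w hw => hfd1 w hw)
  have eI : (fun w => fderiv ℝ (fun x => (1 / 2 : ℝ) * Real.log (u x)) w Complex.I)
      =ᶠ[nhds z] fun w => -(A w).im * (u w)⁻¹ :=
    Filter.eventually_of_mem (hG.mem_nhds hz) (fun w hw => hfdI w hw)
  -- derivatives of the building blocks at z
  have hd0 : HasFDerivAt f₀ (Dc (deriv f₀ z)) z :=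
    (hf₀.differentiableAt (hG.mem_nhds hz)).hasDerivAt.hasFDerivAt.restrictScalars ℝ
  have hd1 : HasFDerivAt f₁ (Dc (deriv f₁ z)) z :=
    (hf₁.differentiableAt (hG.mem_nhds hz)).hasDerivAt.hasFDerivAt.restrictScalars ℝ
  have hdd0 : HasFDerivAt (deriv f₀) (Dc (deriv (deriv f₀) z)) z :=
    (((hf₀.analyticOnNhd hG).deriv z hz).differentiableAt.hasDerivAt).hasFDerivAt.restrictScalars ℝ
  have hdd1 : HasFDerivAt (deriv f₁) (Dc (deriv (deriv f₁) z)) z :=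
    (((hf₁.analyticOnNhd hG).deriv z hz).differentiableAt.hasDerivAt).hasFDerivAt.restrictScalars ℝ
  have hc0 : HasFDerivAt (fun w => (starRingEnd ℂ) (f₀ w))
      (Complex.conjCLE.toContinuousLinearMap.comp (Dc (deriv f₀ z))) z :=
    Complex.conjCLE.toContinuousLinearMap.hasFDerivAt.comp z hd0
  have hc1 : HasFDerivAt (fun w => (starRingEnd ℂ) (f₁ w))
      (Complex.conjCLE.toContinuousLinearMap.comp (Dc (deriv f₁ z))) z :=
    Complex.conjCLE.toContinuousLinearMap.hasFDerivAt.comp z hd1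
  have hAd : HasFDerivAt A
      (((starRingEnd ℂ) (f₀ z) • Dc (deriv (deriv f₀) z)
          + deriv f₀ z • (Complex.conjCLE.toContinuousLinearMap.comp (Dc (deriv f₀ z))))
        + ((starRingEnd ℂ) (f₁ z) • Dc (deriv (deriv f₁) z)
          + deriv f₁ z • (Complex.conjCLE.toContinuousLinearMap.comp (Dc (deriv f₁ z))))) z :=
    (hc0.mul hdd0).add (hc1.mul hdd1)
  have hinv : HasFDerivAt (fun w => (u w)⁻¹)
      ((-(u z ^ 2)⁻¹) • (2 • (innerSL ℝ (f₀ z)).comp (Dc (deriv f₀ z))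
        + 2 • (innerSL ℝ (f₁ z)).comp (Dc (deriv f₁ z)))) z :=
    (hasDerivAt_inv (hpos z hz).ne').comp_hasFDerivAt z (hU z hz)
  have hre : HasFDerivAt (fun w => (A w).re)
      (Complex.reCLM.comp (((starRingEnd ℂ) (f₀ z) • Dc (deriv (deriv f₀) z)
          + deriv f₀ z • (Complex.conjCLE.toContinuousLinearMap.comp (Dc (deriv f₀ z))))
        + ((starRingEnd ℂ) (f₁ z) • Dc (deriv (deriv f₁) z)
          + deriv f₁ z • (Complex.conjCLE.toContinuousLinearMap.comp (Dc (deriv f₁ z)))))) z :=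
    Complex.reCLM.hasFDerivAt.comp z hAd
  have him : HasFDerivAt (fun w => -(A w).im)
      (-(Complex.imCLM.comp (((starRingEnd ℂ) (f₀ z) • Dc (deriv (deriv f₀) z)
          + deriv f₀ z • (Complex.conjCLE.toContinuousLinearMap.comp (Dc (deriv f₀ z))))
        + ((starRingEnd ℂ) (f₁ z) • Dc (deriv (deriv f₁) z)
          + deriv f₁ z • (Complex.conjCLE.toContinuousLinearMap.comp (Dc (deriv f₁ z))))))) z :=
    (Complex.imCLM.hasFDerivAt.comp z hAd).neg
  have hmul1 : HasFDerivAt (fun w => (A w).re * (u w)⁻¹) _ z := hre.mul hinv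
  have hmulI : HasFDerivAt (fun w => -(A w).im * (u w)⁻¹) _ z := him.mul hinv
  rw [laplacian, e1.fderiv_eq, eI.fderiv_eq, hmul1.fderiv, hmulI.fderiv]
  set a := f₀ z; set b := f₁ z; set a1 := deriv f₀ z; set b1 := deriv f₁ z
  set a2 := deriv (deriv f₀) z; set b2 := deriv (deriv f₁) z
  have hune : u z ≠ 0 := (hpos z hz).ne'
  simp only [ContinuousLinearMap.add_apply, ContinuousLinearMap.coe_smul',
    Pi.smul_apply, ContinuousLinearMap.comp_apply, ContinuousLinearMap.neg_apply,
    ContinuousLinearMap.coe_comp', Function.comp_apply, Dc_apply,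
    innerSL_apply_apply, Complex.inner, smul_eq_mul, Complex.reCLM_coe, Complex.reCLM_apply,
    Complex.imCLM_apply, ContinuousLinearEquiv.coe_coe, Complex.conjCLE_apply,
    one_mul, map_mul, Complex.conj_conj, Complex.conj_I, mul_one]
  simp only [hu, hA, smul_eq_mul, Complex.sq_norm, Complex.normSq_apply, Complex.add_re,
    Complex.add_im, Complex.mul_re, Complex.mul_im, Complex.conj_re, Complex.conj_im,
    Complex.neg_re, Complex.neg_im, Complex.sub_re, Complex.sub_im, Complex.I_re, Complex.I_im,
    nsmul_eq_mul, Nat.cast_ofNat]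
  have hne2 : a.re * a.re + a.im * a.im + (b.re * b.re + b.im * b.im) ≠ 0 := by
    simpa [hu, Complex.sq_norm, Complex.normSq_apply] using hune
  field_simp
  ring
end
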